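/- (Bernstein's inequality for martingales.) Let X₁, ..., X_n be a martingale difference sequence with respect to a filtration (𝔉_i)_{1 ≤ i ≤ n} with |X_i| ≤ K almost surely, let S_i = ∑_{j=1}^i X_j, and let Σ_n² = ∑_{t=1}^n E[X_t² | 𝔉_{t−1}] be the sum of conditional variances. Then for all constants t, ν > 0, ℙ[ max_{i=1,...,n} S_i > t and Σ_n² ≤ ν ] ≤ exp( −t² / (2(ν + Kt/3)) ), and consequently ℙ[ max_{i=1,...,n} S_i > √(2νt) + (√2/3)Kt and Σ_n² ≤ ν ] ≤ e^{−t}. -/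

import Mathlib

open MeasureTheory
open scoped BigOperators


lemma fact_ge (n : ℕ) : 2 * 3 ^ n ≤ Nat.factorial (n + 2) := by
  induction n with
  | zero => simp [Nat.factorial]
  | succ k ih =>
    have : Nat.factorial (k + 3) = (k + 3) * Nat.factorial (k + 2) := rfl
    calc 2 * 3 ^ (k + 1) = 3 * (2 * 3 ^ k) := by ring
    _ ≤ 3 * Nat.factorial (k + 2) := by omega
    _ ≤ (k + 3) * Nat.factorial (k + 2) := by
        exact Nat.mul_le_mul_right _ (by omega)
    _ = Nat.factorial (k + 3) := this.symm

lemma exp_quad {u b : ℝ} (hub : |u| ≤ b) (hb : b < 3) :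
    Real.exp u ≤ 1 + u + 3 / (2 * (3 - b)) * u ^ 2 := by
  have hb0 : 0 ≤ b := le_trans (abs_nonneg u) hub
  have hlt : b / 3 < 1 := by linarith
  have hge : 0 ≤ b / 3 := by linarith
  have hexp : Real.exp u = ∑' n : ℕ, u ^ n / (Nat.factorial n) := by
    rw [Real.exp_eq_exp_ℝ, NormedSpace.exp_eq_tsum_div]
  have hsum : Summable (fun n : ℕ => u ^ n / (Nat.factorial n)) := Real.summable_pow_div_factorial u
  have htail : Summable (fun n : ℕ => u ^ (n + 2) / (Nat.factorial (n + 2))) :=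
    (summable_nat_add_iff 2).2 hsum
  have hgeo : Summable (fun n : ℕ => u ^ 2 / 2 * (b / 3) ^ n) :=
    (summable_geometric_of_lt_one hge hlt).mul_left _
  have hsplit : (∑' n : ℕ, u ^ n / (Nat.factorial n)) =
      (∑ n ∈ Finset.range 2, u ^ n / (Nat.factorial n)) + ∑' n : ℕ, u ^ (n + 2) / (Nat.factorial (n + 2)) :=
    (hsum.sum_add_tsum_nat_add 2).symm
  have hterm : ∀ n : ℕ, u ^ (n + 2) / (Nat.factorial (n + 2)) ≤ u ^ 2 / 2 * (b / 3) ^ n := by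
    intro n
    have h1 : u ^ (n + 2) / (Nat.factorial (n + 2)) ≤ |u| ^ (n + 2) / (Nat.factorial (n + 2)) := by
      apply div_le_div_of_nonneg_right ?_ ?_ |>.trans_eq rfl
      · exact (le_abs_self _).trans_eq (abs_pow u (n + 2))
      · positivity
    have h2 : |u| ^ (n + 2) = u ^ 2 * |u| ^ n := by
      rw [pow_add, mul_comm, sq_abs]
    have h3 : |u| ^ n ≤ b ^ n := pow_le_pow_left₀ (abs_nonneg u) hub n
    have h4 : (2 * 3 ^ n : ℝ) ≤ (Nat.factorial (n + 2) : ℝ) := by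
      exact_mod_cast Nat.cast_le.2 (fact_ge n)
    calc u ^ (n + 2) / (Nat.factorial (n + 2)) ≤ |u| ^ (n + 2) / (Nat.factorial (n + 2)) := h1
    _ ≤ (u ^ 2 * b ^ n) / (2 * 3 ^ n) := by
        rw [h2]
        apply div_le_div₀ (by positivity) ?_ (by positivity) h4
        exact mul_le_mul_of_nonneg_left h3 (sq_nonneg u)
    _ = u ^ 2 / 2 * (b / 3) ^ n := by
        rw [div_pow]; ring
  have htsum_le : (∑' n : ℕ, u ^ (n + 2) / (Nat.factorial (n + 2))) ≤ ∑' n : ℕ, u ^ 2 / 2 * (b / 3) ^ n :=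
    htail.tsum_le_tsum hterm hgeo
  have hgeosum : (∑' n : ℕ, u ^ 2 / 2 * (b / 3) ^ n) = u ^ 2 / 2 * (1 - b / 3)⁻¹ := by
    rw [tsum_mul_left, tsum_geometric_of_lt_one hge hlt]
  have hfin : u ^ 2 / 2 * (1 - b / 3)⁻¹ = 3 / (2 * (3 - b)) * u ^ 2 := by
    have h3b : (3 : ℝ) - b ≠ 0 := by linarith
    field_simp
  have hr2 : (∑ n ∈ Finset.range 2, u ^ n / (Nat.factorial n)) = 1 + u := by
    simp [Finset.sum_range_succ, Nat.factorial]
  rw [hexp, hsplit, hr2]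
  linarith [htsum_le.trans_eq (hgeosum.trans hfin)]

theorem core_freedman {Ω : Type*} {m0 : MeasurableSpace Ω}
    (P : Measure Ω) [IsProbabilityMeasure P] (𝔉 : MeasureTheory.Filtration ℕ m0)
    (n : ℕ) (X : ℕ → Ω → ℝ) (K : ℝ)
    (hadp : ∀ i, 1 ≤ i → i ≤ n → StronglyMeasurable[𝔉 i] (X i))
    (hint : ∀ i, 1 ≤ i → i ≤ n → Integrable (X i) P)
    (hmds : ∀ i, 1 ≤ i → i ≤ n → P[X i | 𝔉 (i - 1)] =ᵐ[P] 0)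
    (hbdd : ∀ i, 1 ≤ i → i ≤ n → ∀ᵐ ω ∂P, |X i ω| ≤ K)
    (hK : 0 ≤ K) (ν s l : ℝ) (hl : 0 < l) (hb : l * K < 3) :
    P {ω | (∃ i ∈ Finset.Icc 1 n, s < ∑ j ∈ Finset.Icc 1 i, X j ω) ∧
        (∑ j ∈ Finset.Icc 1 n, (P[fun ω' => X j ω' ^ 2 | 𝔉 (j - 1)]) ω) ≤ ν} ≤
      ENNReal.ofReal (Real.exp (3 / (2 * (3 - l * K)) * l ^ 2 * ν - l * s)) := by
  classical
  set Y : ℕ → Ω → ℝ := fun i => if 1 ≤ i ∧ i ≤ n then X i else 0 with hY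
  have hYadp : ∀ i, StronglyMeasurable[𝔉 i] (Y i) := by
    intro i
    by_cases h : 1 ≤ i ∧ i ≤ n
    · simpa [hY, h] using hadp i h.1 h.2
    · simp only [hY, if_neg h]; exact stronglyMeasurable_const
  have hYint : ∀ i, Integrable (Y i) P := by
    intro i
    by_cases h : 1 ≤ i ∧ i ≤ n
    · simpa [hY, h] using hint i h.1 h.2
    · simp only [hY, if_neg h]; exact integrable_zero _ _ _
  have hYbdd : ∀ i, ∀ᵐ ω ∂P, |Y i ω| ≤ K := by
    intro i
    by_cases h : 1 ≤ i ∧ i ≤ n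
    · simpa [hY, h] using hbdd i h.1 h.2
    · simp only [hY, if_neg h]
      filter_upwards with ω using by simpa using hK
  have hYmds : ∀ i, P[Y i | 𝔉 (i - 1)] =ᵐ[P] 0 := by
    intro i
    by_cases h : 1 ≤ i ∧ i ≤ n
    · simpa [hY, h] using hmds i h.1 h.2
    · simp only [hY, if_neg h]
      simpa using condExp_zero (m := 𝔉 (i - 1)) (μ := P)
  have hYsq_int : ∀ i, Integrable (fun ω => Y i ω ^ 2) P := by
    intro i
    refine Integrable.mono' (integrable_const (K ^ 2))
      (((hYadp i).mono (𝔉.le i)).pow 2).aestronglyMeasurable ?_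
    filter_upwards [hYbdd i] with ω hω
    rw [Real.norm_eq_abs, abs_pow]
    exact pow_le_pow_left₀ (abs_nonneg _) hω 2
  set W : ℕ → Ω → ℝ := fun j => P[fun ω => Y j ω ^ 2 | 𝔉 (j - 1)] with hW
  have hWmeas : ∀ j, StronglyMeasurable[𝔉 (j - 1)] (W j) := fun j => stronglyMeasurable_condExp
  have hWnonneg : ∀ j, 0 ≤ᵐ[P] W j := fun j =>
    condExp_nonneg (Filter.Eventually.of_forall fun ω => sq_nonneg _)
  set Sb : ℕ → Ω → ℝ := fun i ω => ∑ j ∈ Finset.Icc 1 i, Y j ω with hSb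
  set Vb : ℕ → Ω → ℝ := fun i ω => ∑ j ∈ Finset.Icc 1 i, W j ω with hVb
  set c : ℝ := 3 / (2 * (3 - l * K)) with hc
  have h3b : 0 < 3 - l * K := by linarith
  have hcpos : 0 < c := by positivity
  set κ : ℝ := c * l ^ 2 with hκ
  have hκ0 : 0 ≤ κ := by positivity
  set M : ℕ → Ω → ℝ := fun i ω => Real.exp (l * Sb i ω - κ * Vb i ω) with hM
  -- adaptedness
  have hSbadp : StronglyAdapted 𝔉 Sb := by
    intro i
    apply Finset.stronglyMeasurable_fun_sum
    intro j hj
    exact (hYadp j).mono (𝔉.mono (Finset.mem_Icc.1 hj).2)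
  have hVbSM : ∀ i m, i ≤ m + 1 → StronglyMeasurable[𝔉 m] (Vb i) := by
    intro i m him
    apply Finset.stronglyMeasurable_fun_sum
    intro j hj
    exact (hWmeas j).mono (𝔉.mono (by
      have := (Finset.mem_Icc.1 hj).2; omega))
  have hMadp : StronglyAdapted 𝔉 M := by
    intro i
    exact Real.continuous_exp.comp_stronglyMeasurable
      (((hSbadp i).const_mul l).sub ((hVbSM i i (by omega)).const_mul κ))
  -- a.e. pointwise bounds
  have hEbig : ∀ᵐ ω ∂P, (∀ j, 0 ≤ W j ω) ∧ (∀ j, |Y j ω| ≤ K) := by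
    rw [Filter.eventually_and]
    constructor
    · exact ae_all_iff.2 hWnonneg
    · exact ae_all_iff.2 hYbdd
  have hMbdd : ∀ i, ∀ᵐ ω ∂P, ‖M i ω‖ ≤ Real.exp (l * (i * K)) := by
    intro i
    filter_upwards [hEbig] with ω hω
    rw [Real.norm_eq_abs, abs_of_pos (Real.exp_pos _), Real.exp_le_exp]
    have hSle : Sb i ω ≤ i * K := by
      calc Sb i ω ≤ ∑ j ∈ Finset.Icc 1 i, K :=
            Finset.sum_le_sum fun j _ => (abs_le.1 (hω.2 j)).2
      _ = (Finset.Icc 1 i).card * K := by rw [Finset.sum_const, nsmul_eq_mul]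
      _ ≤ i * K := by
          rw [Nat.card_Icc]
          exact mul_le_mul_of_nonneg_right (by simp) hK
    have hVnn : 0 ≤ Vb i ω := Finset.sum_nonneg fun j _ => hω.1 j
    have : l * Sb i ω ≤ l * (i * K) := mul_le_mul_of_nonneg_left hSle hl.le
    nlinarith
  have hMint : ∀ i, Integrable (M i) P := fun i =>
    Integrable.mono' (integrable_const _) ((hMadp i).mono (𝔉.le i)).aestronglyMeasurable
      (hMbdd i)
  -- supermartingale step
  have hstep : ∀ i, P[M (i + 1) | 𝔉 i] ≤ᵐ[P] M i := by
    intro i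
    have hsucc : ∀ ω, Sb (i + 1) ω = Sb i ω + Y (i + 1) ω := by
      intro ω
      exact Finset.sum_Icc_succ_top (Nat.one_le_iff_ne_zero.2 (Nat.succ_ne_zero i)) _
    have hVsucc : ∀ ω, Vb (i + 1) ω = Vb i ω + W (i + 1) ω := by
      intro ω
      exact Finset.sum_Icc_succ_top (Nat.one_le_iff_ne_zero.2 (Nat.succ_ne_zero i)) _
    set A : Ω → ℝ := fun ω => Real.exp (l * Sb i ω - κ * Vb (i + 1) ω) with hA
    set B : Ω → ℝ := fun ω => Real.exp (l * Y (i + 1) ω) with hB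
    have hMAB : M (i + 1) = fun ω => A ω * B ω := by
      funext ω
      rw [hM, hA, hB]
      simp only
      rw [← Real.exp_add, hsucc ω]
      ring_nf
    have hAmeas : StronglyMeasurable[𝔉 i] A :=
      Real.continuous_exp.comp_stronglyMeasurable
        (((hSbadp i).const_mul l).sub ((hVbSM (i + 1) i (le_refl _)).const_mul κ))
    have hBint : Integrable B P := by
      refine Integrable.mono' (integrable_const (Real.exp (l * K)))
        (Real.continuous_exp.comp_stronglyMeasurable
          (((hYadp (i + 1)).mono (𝔉.le _)).const_mul l)).aestronglyMeasurable ?_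
      filter_upwards [hYbdd (i + 1)] with ω hω
      rw [Real.norm_eq_abs, hB, abs_of_pos (Real.exp_pos _), Real.exp_le_exp]
      exact mul_le_mul_of_nonneg_left ((abs_le.1 hω).2) hl.le
    have hABint : Integrable (A * B) P := by
      have := hMint (i + 1)
      rw [hMAB] at this
      exact this
    have hmul : P[A * B | 𝔉 i] =ᵐ[P] A * P[B | 𝔉 i] :=
      condExp_mul_of_stronglyMeasurable_left hAmeas hABint hBint
    -- bound conditional expectation of B
    have hWi : W (i + 1) = P[fun ω => Y (i + 1) ω ^ 2 | 𝔉 i] := rfl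
    have hmdsi : P[Y (i + 1) | 𝔉 i] =ᵐ[P] 0 := hYmds (i + 1)
    set R : Ω → ℝ := fun ω => 1 + l * Y (i + 1) ω + κ * Y (i + 1) ω ^ 2 with hR
    have hRint : Integrable R P := by
      apply Integrable.add
      apply Integrable.add (integrable_const 1) ((hYint (i + 1)).const_mul l)
      exact (hYsq_int (i + 1)).const_mul κ
    have hBleR : B ≤ᵐ[P] R := by
      filter_upwards [hYbdd (i + 1)] with ω hω
      have hub : |l * Y (i + 1) ω| ≤ l * K := by
        rw [abs_mul, abs_of_pos hl]
        exact mul_le_mul_of_nonneg_left hω hl.le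
      have := exp_quad hub hb
      calc B ω ≤ 1 + l * Y (i + 1) ω + c * (l * Y (i + 1) ω) ^ 2 := this
      _ = R ω := by rw [hR]; simp only [hκ]; ring
    have hcondR : P[R | 𝔉 i] =ᵐ[P] fun ω => 1 + l * (P[Y (i + 1) | 𝔉 i]) ω
        + κ * W (i + 1) ω := by
      have h1 : R = (fun _ => (1 : ℝ)) + (l • Y (i + 1) + κ • fun ω => Y (i + 1) ω ^ 2) := by
        funext ω; simp [hR]; ring
      rw [h1]
      have hadd1 := condExp_add (μ := P) (m := 𝔉 i) (integrable_const (1 : ℝ))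
        (((hYint (i + 1)).smul l).add ((hYsq_int (i + 1)).smul κ))
      have hadd2 := condExp_add (μ := P) (m := 𝔉 i) ((hYint (i + 1)).smul l)
        ((hYsq_int (i + 1)).smul κ)
      have hsm1 := condExp_smul (μ := P) (m := 𝔉 i) l (Y (i + 1))
      have hsm2 := condExp_smul (μ := P) (m := 𝔉 i) κ (fun ω => Y (i + 1) ω ^ 2)
      have hcst := condExp_const (μ := P) (𝔉.le i) (1 : ℝ)
      filter_upwards [hadd1, hadd2, hsm1, hsm2] with ω e1 e2 e3 e4
      rw [show (P[(fun _ => (1 : ℝ)) + (l • Y (i + 1) + κ • fun ω => Y (i + 1) ω ^ 2)|𝔉 i]) ω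
        = (P[(fun _ => (1 : ℝ))|𝔉 i]) ω
          + (P[l • Y (i + 1) + κ • (fun ω => Y (i + 1) ω ^ 2)|𝔉 i]) ω from e1]
      rw [hcst]
      rw [show (P[l • Y (i + 1) + κ • (fun ω => Y (i + 1) ω ^ 2)|𝔉 i]) ω
        = (P[l • Y (i + 1)|𝔉 i]) ω + (P[κ • (fun ω => Y (i + 1) ω ^ 2)|𝔉 i]) ω from e2]
      rw [show (P[l • Y (i + 1)|𝔉 i]) ω = (l • P[Y (i + 1)|𝔉 i]) ω from e3]
      rw [show (P[κ • (fun ω => Y (i + 1) ω ^ 2)|𝔉 i]) ω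
        = (κ • P[(fun ω => Y (i + 1) ω ^ 2)|𝔉 i]) ω from e4]
      simp only [Pi.smul_apply, smul_eq_mul]
      rw [hWi]
      ring
    have hMAB' : M (i + 1) = A * B := hMAB
    have h6 : P[M (i + 1)|𝔉 i] =ᵐ[P] A * P[B|𝔉 i] := hMAB' ▸ hmul
    have h7 : A * P[B|𝔉 i] ≤ᵐ[P] M i := by
      have hcond_le : P[B|𝔉 i] ≤ᵐ[P] P[R|𝔉 i] := condExp_mono hBint hRint hBleR
      filter_upwards [hcond_le, hcondR, hmdsi] with ω h₁ h₂ h₃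
      have hBle : (P[B|𝔉 i]) ω ≤ 1 + κ * W (i + 1) ω := by
        rw [h₂] at h₁
        simp only [Pi.zero_apply] at h₃
        rw [h₃] at h₁
        simpa using h₁
      have hexp : 1 + κ * W (i + 1) ω ≤ Real.exp (κ * W (i + 1) ω) := by
        linarith [Real.add_one_le_exp (κ * W (i + 1) ω)]
      calc (A * P[B|𝔉 i]) ω = A ω * (P[B|𝔉 i]) ω := rfl
      _ ≤ A ω * Real.exp (κ * W (i + 1) ω) :=
          mul_le_mul_of_nonneg_left (hBle.trans hexp) (Real.exp_pos _).le
      _ = M i ω := by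
          rw [hA, hM]
          simp only
          rw [← Real.exp_add]
          congr 1
          rw [hVsucc ω]
          ring
    exact h6.le.trans h7
  have hsuper : Supermartingale M 𝔉 P := supermartingale_nat hMadp hMint hstep
  -- optional stopping / hitting argument
  set τ0 : Ω → ℕ := hittingBtwn Sb (Set.Ioi s) 0 n with hτ0def
  set τ : Ω → ℕ∞ := fun ω => ((τ0 ω : ℕ) : ℕ∞) with hτdef
  have hτ : IsStoppingTime 𝔉 τ := hSbadp.adapted.isStoppingTime_hittingBtwn measurableSet_Ioi
  have hτle : ∀ ω, τ ω ≤ n := fun ω => WithTop.coe_le_coe.2 (hittingBtwn_le ω)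
  have hsubneg : Submartingale (-M) 𝔉 P := hsuper.neg
  have hsv_int : Integrable (stoppedValue M τ) P := by
    have := hsubneg.integrable_stoppedValue hτ hτle
    have h2 : stoppedValue (-M) τ = -(stoppedValue M τ) := rfl
    rw [h2] at this
    simpa using this.neg
  have hkey : ∫ ω, stoppedValue M τ ω ∂P ≤ 1 := by
    have hmono : ∫ x, stoppedValue (-M) (fun _ => ((0 : ℕ) : WithTop ℕ)) x ∂P ≤
        ∫ x, stoppedValue (-M) τ x ∂P :=
      hsubneg.expected_stoppedValue_mono (isStoppingTime_const 𝔉 0) hτ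
      (fun ω => WithTop.coe_le_coe.2 (Nat.zero_le _)) hτle
    have h0 : stoppedValue (-M) (fun _ => ((0 : ℕ) : WithTop ℕ)) = fun ω => -(M 0 ω) := rfl
    have hτ' : stoppedValue (-M) τ = fun ω => -(stoppedValue M τ ω) := rfl
    rw [h0, hτ'] at hmono
    rw [integral_neg, integral_neg] at hmono
    have hM0 : (fun ω => M 0 ω) = fun _ => (1 : ℝ) := by
      funext ω
      rw [hM]
      simp [hSb, hVb]
    rw [hM0] at hmono
    simp only [integral_const, probReal_univ, smul_eq_mul, one_mul] at hmono
    linarith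
  -- identify the event with Sb/Vb
  have hXY : ∀ i, i ∈ Finset.Icc 1 n → Y i = X i := by
    intro i hi
    rw [hY]
    simp only
    rw [if_pos ⟨(Finset.mem_Icc.1 hi).1, (Finset.mem_Icc.1 hi).2⟩]
  have hSbX : ∀ i, i ≤ n → ∀ ω, Sb i ω = ∑ j ∈ Finset.Icc 1 i, X j ω := by
    intro i hin ω
    apply Finset.sum_congr rfl
    intro j hj
    rw [hXY j (Finset.mem_Icc.2 ⟨(Finset.mem_Icc.1 hj).1,
      le_trans (Finset.mem_Icc.1 hj).2 hin⟩)]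
  have hVbX : ∀ ω, Vb n ω = ∑ j ∈ Finset.Icc 1 n, (P[fun ω' => X j ω' ^ 2 | 𝔉 (j - 1)]) ω := by
    intro ω
    apply Finset.sum_congr rfl
    intro j hj
    have hfun : (fun ω => Y j ω ^ 2) = fun ω' => X j ω' ^ 2 := by rw [hXY j hj]
    show (P[fun ω => Y j ω ^ 2|𝔉 (j - 1)]) ω = _
    rw [hfun]
  have hseteq : {ω | (∃ i ∈ Finset.Icc 1 n, s < ∑ j ∈ Finset.Icc 1 i, X j ω) ∧
        (∑ j ∈ Finset.Icc 1 n, (P[fun ω' => X j ω' ^ 2 | 𝔉 (j - 1)]) ω) ≤ ν}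
      = {ω | (∃ i ∈ Finset.Icc 1 n, s < Sb i ω) ∧ Vb n ω ≤ ν} := by
    ext ω
    simp only [Set.mem_setOf_eq]
    constructor
    · rintro ⟨⟨i, hi, hlt⟩, hv⟩
      refine ⟨⟨i, hi, ?_⟩, ?_⟩
      · rw [hSbX i (Finset.mem_Icc.1 hi).2 ω]; exact hlt
      · rw [hVbX ω]; exact hv
    · rintro ⟨⟨i, hi, hlt⟩, hv⟩
      rw [hSbX i (Finset.mem_Icc.1 hi).2 ω] at hlt
      rw [hVbX ω] at hv
      exact ⟨⟨i, hi, hlt⟩, hv⟩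
  rw [hseteq]
  set D : Set Ω := {ω | (∃ i ∈ Finset.Icc 1 n, s < Sb i ω) ∧ Vb n ω ≤ ν} with hD
  have hDmeas : MeasurableSet D := by
    have h1 : ∀ i : ℕ, MeasurableSet {ω | s < Sb i ω} :=
      fun i => measurableSet_lt measurable_const ((hSbadp i).mono (𝔉.le i)).measurable
    have h2 : MeasurableSet {ω | Vb n ω ≤ ν} :=
      measurableSet_le ((hVbSM n n (by omega)).mono (𝔉.le n)).measurable measurable_const
    have : D = (⋃ i ∈ Finset.Icc 1 n, {ω | s < Sb i ω}) ∩ {ω | Vb n ω ≤ ν} := by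
      ext ω
      simp [hD]
    rw [this]
    exact (MeasurableSet.biUnion (Finset.Icc 1 n).countable_toSet fun i _ => h1 i).inter h2
  set ε : ℝ := Real.exp (l * s - κ * ν) with hε
  have hεpos : 0 < ε := Real.exp_pos _
  have hclaim : ∀ᵐ ω ∂P, ω ∈ D → ε ≤ stoppedValue M τ ω := by
    filter_upwards [hEbig] with ω hω hωD
    obtain ⟨⟨i, hi, hlt⟩, hv⟩ := hωD
    have hmem : ∃ j ∈ Set.Icc 0 n, Sb j ω ∈ Set.Ioi s :=
      ⟨i, ⟨Nat.zero_le _, (Finset.mem_Icc.1 hi).2⟩, hlt⟩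
    have hSτ : s < Sb (τ0 ω) ω := stoppedValue_hittingBtwn_mem hmem
    have hVτ : Vb (τ0 ω) ω ≤ ν := by
      refine le_trans ?_ hv
      apply Finset.sum_le_sum_of_subset_of_nonneg
      · exact Finset.Icc_subset_Icc_right (hittingBtwn_le ω)
      · intro j _ _
        exact hω.1 j
    have : stoppedValue M τ ω = Real.exp (l * Sb (τ0 ω) ω - κ * Vb (τ0 ω) ω) := rfl
    rw [this, hε, Real.exp_le_exp]
    have h1 : l * s ≤ l * Sb (τ0 ω) ω := mul_le_mul_of_nonneg_left hSτ.le hl.le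
    have h2 : κ * Vb (τ0 ω) ω ≤ κ * ν := mul_le_mul_of_nonneg_left hVτ hκ0
    linarith
  have hsv_nonneg : 0 ≤ᵐ[P] stoppedValue M τ :=
    Filter.Eventually.of_forall fun ω => (Real.exp_pos _).le
  have hineq : ε * (P D).toReal ≤ 1 := by
    have h1 : ∫ ω in D, ε ∂P ≤ ∫ ω in D, stoppedValue M τ ω ∂P := by
      apply setIntegral_mono_ae_restrict (integrable_const ε).integrableOn
        hsv_int.integrableOn
      exact (MeasureTheory.ae_restrict_iff' hDmeas).2 hclaim
    have h2 : ∫ ω in D, stoppedValue M τ ω ∂P ≤ ∫ ω, stoppedValue M τ ω ∂P :=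
      setIntegral_le_integral hsv_int hsv_nonneg
    have h3 : ∫ ω in D, ε ∂P = (P D).toReal * ε := by
      rw [setIntegral_const]; rw [smul_eq_mul]; rfl
    linarith [hkey]
  have htoReal : (P D).toReal ≤ Real.exp (κ * ν - l * s) := by
    have h8 : (P D).toReal ≤ 1 / ε := by
      rw [le_div_iff₀ hεpos]
      linarith
    have h9 : (1 : ℝ) / ε = Real.exp (κ * ν - l * s) := by
      rw [hε, one_div, ← Real.exp_neg, neg_sub]
    linarith
  have hexpeq : κ * ν - l * s = 3 / (2 * (3 - l * K)) * l ^ 2 * ν - l * s := by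
    rw [hκ, hc]
  calc P D = ENNReal.ofReal (P D).toReal := (ENNReal.ofReal_toReal (measure_ne_top _ _)).symm
  _ ≤ ENNReal.ofReal (Real.exp (κ * ν - l * s)) := ENNReal.ofReal_le_ofReal htoReal
  _ = ENNReal.ofReal (Real.exp (3 / (2 * (3 - l * K)) * l ^ 2 * ν - l * s)) := by
      rw [hexpeq]


/-- Bernstein's inequality for martingales. For a martingale difference
sequence `X₁, …, Xₙ` with `|Xᵢ| ≤ K` a.s., partial sums `Sᵢ` and sum of conditional
variances `Σₙ²`, for all `t, ν > 0`:
`ℙ[max_i Sᵢ > t ∧ Σₙ² ≤ ν] ≤ exp(-t²/(2(ν + Kt/3)))`, and consequently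
`ℙ[max_i Sᵢ > √(2νt) + (√2/3)Kt ∧ Σₙ² ≤ ν] ≤ e^{-t}`. -/
theorem stmt_5 {Ω : Type*} {m0 : MeasurableSpace Ω}
    (P : Measure Ω) [IsProbabilityMeasure P] (𝔉 : MeasureTheory.Filtration ℕ m0)
    (n : ℕ) (X : ℕ → Ω → ℝ) (K : ℝ)
    (hadp : ∀ i, 1 ≤ i → i ≤ n → StronglyMeasurable[𝔉 i] (X i))
    (hint : ∀ i, 1 ≤ i → i ≤ n → Integrable (X i) P)
    (hmds : ∀ i, 1 ≤ i → i ≤ n → P[X i | 𝔉 (i - 1)] =ᵐ[P] 0)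
    (hbdd : ∀ i, 1 ≤ i → i ≤ n → ∀ᵐ ω ∂P, |X i ω| ≤ K)
    (S : ℕ → Ω → ℝ) (hS : ∀ i ω, S i ω = ∑ j ∈ Finset.Icc 1 i, X j ω)
    (Vsum : Ω → ℝ)
    (hVsum : ∀ ω, Vsum ω = ∑ t ∈ Finset.Icc 1 n, (P[fun ω' => X t ω' ^ 2 | 𝔉 (t - 1)]) ω)
    (t ν : ℝ) (ht : 0 < t) (hν : 0 < ν) :
    P {ω | (∃ i ∈ Finset.Icc 1 n, t < S i ω) ∧ Vsum ω ≤ ν} ≤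
        ENNReal.ofReal (Real.exp (-(t ^ 2) / (2 * (ν + K * t / 3)))) ∧
    P {ω | (∃ i ∈ Finset.Icc 1 n, Real.sqrt (2 * ν * t) + Real.sqrt 2 / 3 * K * t < S i ω) ∧
          Vsum ω ≤ ν} ≤
        ENNReal.ofReal (Real.exp (-t)) := by
  by_cases hn0 : n = 0
  · subst hn0
    have he : Finset.Icc 1 0 = (∅ : Finset ℕ) := by simp
    constructor <;>
    · rw [show {ω | (∃ i ∈ Finset.Icc 1 0, _ < S i ω) ∧ Vsum ω ≤ ν} = (∅ : Set Ω) from by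
        ext ω; simp [he]]
      simp
  have hK : 0 ≤ K := by
    by_contra h
    push_neg at h
    have h1 := hbdd 1 le_rfl (by omega)
    have h2 : ∀ᵐ ω ∂P, False := by
      filter_upwards [h1] with ω hω
      linarith [abs_nonneg (X 1 ω)]
    rw [ae_iff] at h2
    simp only [not_false_eq_true, Set.setOf_true] at h2
    rw [measure_univ] at h2
    exact one_ne_zero h2
  have hsets : ∀ a : ℝ, {ω | (∃ i ∈ Finset.Icc 1 n, a < S i ω) ∧ Vsum ω ≤ ν}
      = {ω | (∃ i ∈ Finset.Icc 1 n, a < ∑ j ∈ Finset.Icc 1 i, X j ω) ∧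
          (∑ j ∈ Finset.Icc 1 n, (P[fun ω' => X j ω' ^ 2 | 𝔉 (j - 1)]) ω) ≤ ν} := by
    intro a
    ext ω
    simp only [Set.mem_setOf_eq, hS, hVsum]
  constructor
  · -- Part 1
    have hD : 0 < ν + K * t / 3 := by positivity
    set l1 : ℝ := t / (ν + K * t / 3) with hl1def
    have hl1 : 0 < l1 := div_pos ht hD
    have hb1 : l1 * K < 3 := by
      rw [hl1def, div_mul_eq_mul_div, div_lt_iff₀ hD]
      nlinarith
    have h1 := core_freedman P 𝔉 n X K hadp hint hmds hbdd hK ν t l1 hl1 hb1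
    rw [hsets t]
    refine h1.trans (le_of_eq ?_)
    congr 1
    have h3 : 3 - l1 * K = 3 * ν / (ν + K * t / 3) := by
      rw [hl1def]
      field_simp
      ring
    rw [h3, hl1def]
    field_simp
    ring
  · -- Part 2
    set r : ℝ := Real.sqrt (2 * t / ν) with hrdef
    have hr : 0 < r := Real.sqrt_pos.2 (by positivity)
    have hr2 : r ^ 2 = 2 * t / ν := Real.sq_sqrt (by positivity)
    have hE : 0 < 1 + K * r / 3 := by positivity
    set l2 : ℝ := r / (1 + K * r / 3) with hl2def
    have hl2 : 0 < l2 := div_pos hr hE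
    have hb2 : l2 * K < 3 := by
      rw [hl2def, div_mul_eq_mul_div, div_lt_iff₀ hE]
      nlinarith
    have h2 := core_freedman P 𝔉 n X K hadp hint hmds hbdd hK ν
      (Real.sqrt (2 * ν * t) + Real.sqrt 2 / 3 * K * t) l2 hl2 hb2
    rw [hsets (Real.sqrt (2 * ν * t) + Real.sqrt 2 / 3 * K * t)]
    refine h2.trans ?_
    apply ENNReal.ofReal_le_ofReal
    apply Real.exp_le_exp.2
    have hνr : ν * r = Real.sqrt (2 * ν * t) := by
      rw [hrdef, show 2 * ν * t = ν ^ 2 * (2 * t / ν) from by field_simp,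
        Real.sqrt_mul (sq_nonneg ν), Real.sqrt_sq hν.le]
    have hKey : 3 - l2 * K = 3 / (1 + K * r / 3) := by
      rw [hl2def]
      field_simp
      ring
    have h12 : (1 : ℝ) ≤ Real.sqrt 2 := by
      rw [show (1 : ℝ) = Real.sqrt 1 from Real.sqrt_one.symm]
      exact Real.sqrt_le_sqrt (by norm_num)
    have hs0 : Real.sqrt (2 * ν * t) + K * t / 3 ≤
        Real.sqrt (2 * ν * t) + Real.sqrt 2 / 3 * K * t := by
      nlinarith [mul_nonneg (mul_nonneg (sub_nonneg.2 h12) hK) ht.le]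
    have hmain : 3 / (2 * (3 - l2 * K)) * l2 ^ 2 * ν -
        l2 * (Real.sqrt (2 * ν * t) + K * t / 3) = -t := by
      rw [hKey, ← hνr, hl2def]
      have hE' : (1 + K * r / 3) ≠ 0 := hE.ne'
      have hνr2 : ν * r ^ 2 = 2 * t := by
        rw [hr2]; field_simp
      field_simp
      nlinarith [hνr2, hr, hE]
    have hstep : l2 * (Real.sqrt (2 * ν * t) + K * t / 3) ≤
        l2 * (Real.sqrt (2 * ν * t) + Real.sqrt 2 / 3 * K * t) :=
      mul_le_mul_of_nonneg_left hs0 hl2.le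
    linarith
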